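/- arXiv:0809.5110 — 2 statements merged into one kernel-verified Lean document; each statement's English description precedes it below -/
import Mathlib

section
/- In the shuffle algebra, for n ≥ 2: ∑_{r, s ≥ 1, r + s = n} z_r ш z_s = ∑_{t1, t2 ≥ 1, t1 + t2 = n} 2^{t1} z_{t1, t2}, where ш is the transported shuffle product. -/
open Finsupp

/-- The free ℤ-module on words in the two letters `x₀, x₁`
(`false` plays the role of `x₀` and `true` the role of `x₁`). -/
abbrev XWords : Type := (List Bool) →₀ ℤ

/-- The free ℤ-module on words `z_{s₁,…,s_k}` (a word is the list of its indices). -/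
abbrev QWords : Type := (List ℕ) →₀ ℤ

/-- A word in `x₀, x₁` as a basis element. -/
noncomputable def xw (l : List Bool) : XWords := Finsupp.single l 1

/-- The word `z_{s₁,…,s_k}` as a basis element. -/
noncomputable def zw (l : List ℕ) : QWords := Finsupp.single l 1

/-- The bijection `z_{s₁,…,s_k} ↔ x₀^{s₁-1} x₁ ⋯ x₀^{s_k-1} x₁` on words. -/
def encodeWord : List ℕ → List Bool
  | [] => []
  | s :: t => List.replicate (s - 1) false ++ true :: encodeWord t

/- ### Auxiliary definitions -/

/-- `x₀^a x₁` -/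
def wzW (a : ℕ) : List Bool := List.replicate a false ++ [true]

/-- `x₀^p x₁ x₀^q x₁` -/
def wwW (p q : ℕ) : List Bool := List.replicate p false ++ true :: (List.replicate q false ++ [true])

/-- Inverse of `encodeWord` on good words. -/
def decodeWord : List Bool → List ℕ
  | [] => []
  | true :: t => 1 :: decodeWord t
  | false :: t => match decodeWord t with
    | [] => []
    | s :: r => (s + 1) :: r

lemma decode_replicate (k : ℕ) (t : List Bool) (s : ℕ) (r : List ℕ)
    (h : decodeWord t = s :: r) :
    decodeWord (List.replicate k false ++ t) = (s + k) :: r := by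
  induction k with
  | zero => simpa using h
  | succ k ih =>
      rw [List.replicate_succ, List.cons_append]
      show (match decodeWord (List.replicate k false ++ t) with
        | [] => [] | s :: r => (s + 1) :: r) = _
      rw [ih]
      ring_nf

lemma decode_encode (l : List ℕ) (hl : ∀ x ∈ l, 1 ≤ x) :
    decodeWord (encodeWord l) = l := by
  induction l with
  | nil => rfl
  | cons s t ih =>
      have hs : 1 ≤ s := hl s (by simp)
      have ht : decodeWord (encodeWord t) = t := ih fun x hx => hl x (by simp [hx])
      show decodeWord (List.replicate (s - 1) false ++ (true :: encodeWord t)) = s :: t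
      rw [decode_replicate (s - 1) _ 1 t]
      · congr 1; omega
      · show 1 :: decodeWord (encodeWord t) = 1 :: t
        rw [ht]

lemma recover (X : QWords) (hX : ∀ l ∈ X.support, ∀ x ∈ l, 1 ≤ x) :
    Finsupp.mapDomain decodeWord (Finsupp.mapDomain encodeWord X) = X := by
  rw [← Finsupp.mapDomain_comp]
  have h : ∀ l ∈ X.support, (decodeWord ∘ encodeWord) l = id l :=
    fun l hl => decode_encode l (hX l hl)
  rw [Finsupp.mapDomain_congr h, Finsupp.mapDomain_id]

lemma xw_cons (c : Bool) (l : List Bool) :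
    Finsupp.mapDomain (List.cons c) (xw l) = xw (c :: l) := by
  simp [xw, Finsupp.mapDomain_single]

lemma wz_succ (a : ℕ) : wzW (a + 1) = false :: wzW a := by
  simp [wzW, List.replicate_succ]

lemma ww_succ (p q : ℕ) : wwW (p + 1) q = false :: wwW p q := by
  simp [wwW, List.replicate_succ]

lemma true_cons_wz (a : ℕ) : true :: wzW a = wwW 0 a := by
  simp [wzW, wwW]

/-- Reindexing sums over the filtered antidiagonal. -/
lemma sum_filter_antidiag {M : Type*} [AddCommMonoid M] (f : ℕ × ℕ → M) (m : ℕ) :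
    ∑ p ∈ (Finset.HasAntidiagonal.antidiagonal (m + 2)).filter (fun p => 1 ≤ p.1 ∧ 1 ≤ p.2), f p
      = ∑ i ∈ Finset.range (m + 1), f (i + 1, m - i + 1) := by
  refine Finset.sum_bij' (fun p _ => p.1 - 1) (fun i _ => (i + 1, m - i + 1)) ?_ ?_ ?_ ?_ ?_ <;>
    simp only [Finset.mem_filter, Finset.HasAntidiagonal.mem_antidiagonal, Finset.mem_range, Prod.forall]
  · rintro a b ⟨h1, h2, h3⟩; omega
  · intro i hi; omega
  · rintro a b ⟨h1, h2, h3⟩; ext <;> simp <;> omega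
  · intro i hi; omega
  · rintro a b ⟨h1, h2, h3⟩
    have : (a - 1 + 1, m - (a - 1) + 1) = (a, b) := by ext <;> simp <;> omega
    rw [this]

/-- The key shuffle-of-two-`z`-letters formula on the `x`-side. -/
lemma key_formula
    (sh : XWords →ₗ[ℤ] XWords →ₗ[ℤ] XWords)
    (hsunitl : ∀ w : XWords, sh (xw []) w = w)
    (hsunitr : ∀ w : XWords, sh w (xw []) = w)
    (hsrec : ∀ (a b : Bool) (u v : List Bool),
      sh (xw (a :: u)) (xw (b :: v)) =
        Finsupp.mapDomain (List.cons a) (sh (xw u) (xw (b :: v))) +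
          Finsupp.mapDomain (List.cons b) (sh (xw (a :: u)) (xw v))) :
    ∀ N a b : ℕ, a + b = N →
      sh (xw (wzW a)) (xw (wzW b)) =
        ∑ p ∈ Finset.range (N + 1),
          ((p.choose a + p.choose b : ℤ)) • xw (wwW p (N - p)) := by
  have wz_zero : wzW 0 = [true] := rfl
  intro N
  induction N with
  | zero =>
      intro a b hab
      obtain ⟨rfl, rfl⟩ : a = 0 ∧ b = 0 := by omega
      have h := hsrec true true [] []
      rw [hsunitl, hsunitr, xw_cons] at h
      rw [wz_zero]
      rw [h]
      simp [wwW, two_smul, Finset.sum_range_one]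
  | succ N ih =>
      intro a b hab
      cases a with
      | zero =>
        cases b with
        | zero => omega
        | succ B =>
          obtain rfl : B = N := by omega
          rw [wz_zero, wz_succ]
          rw [hsrec true false [] (wzW B), hsunitl]
          rw [show (true :: ([] : List Bool)) = wzW 0 from rfl]
          rw [ih 0 B (by omega), ← wz_succ, Finsupp.mapDomain_finset_sum]
          conv_rhs => rw [Finset.sum_range_succ']
          simp only [Finsupp.mapDomain_smul, xw_cons, ww_succ, true_cons_wz]
          conv_lhs => rw [add_comm]
          congr 1
          · apply Finset.sum_congr rfl
            intro p hp
            simp only [Finset.mem_range] at hp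
            have hw : B + 1 - (p + 1) = B - p := by omega
            rw [hw]
            congr 1
            have h2 : Nat.choose (p + 1) (B + 1) = Nat.choose p B := by
              have h3 : Nat.choose p (B + 1) = 0 := Nat.choose_eq_zero_of_lt (by omega)
              simp [Nat.choose_succ_succ, h3]
            push_cast [h2, Nat.choose_zero_right]; ring
          · have h0 : Nat.choose 0 (B + 1) = 0 := Nat.choose_eq_zero_of_lt (by omega)
            simp [h0]
      | succ A =>
        cases b with
        | zero =>
          obtain rfl : A = N := by omega
          rw [wz_zero, wz_succ]
          rw [hsrec false true (wzW A) [], hsunitr]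
          rw [show (true :: ([] : List Bool)) = wzW 0 from rfl]
          rw [ih A 0 (by omega), ← wz_succ, Finsupp.mapDomain_finset_sum]
          conv_rhs => rw [Finset.sum_range_succ']
          simp only [Finsupp.mapDomain_smul, xw_cons, ww_succ, true_cons_wz]
          congr 1
          · apply Finset.sum_congr rfl
            intro p hp
            simp only [Finset.mem_range] at hp
            have hw : A + 1 - (p + 1) = A - p := by omega
            rw [hw]
            congr 1
            have h2 : Nat.choose (p + 1) (A + 1) = Nat.choose p A := by
              have h3 : Nat.choose p (A + 1) = 0 := Nat.choose_eq_zero_of_lt (by omega)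
              simp [Nat.choose_succ_succ, h3]
            push_cast [h2, Nat.choose_zero_right]; ring
          · have h0 : Nat.choose 0 (A + 1) = 0 := Nat.choose_eq_zero_of_lt (by omega)
            simp [h0]
        | succ B =>
          rw [wz_succ A, wz_succ B]
          rw [hsrec false false (wzW A) (wzW B), ← wz_succ B, ← wz_succ A,
            ih A (B + 1) (by omega), ih (A + 1) B (by omega),
            Finsupp.mapDomain_finset_sum, Finsupp.mapDomain_finset_sum]
          conv_rhs => rw [Finset.sum_range_succ']
          simp only [Finsupp.mapDomain_smul, xw_cons, ww_succ]
          rw [← Finset.sum_add_distrib]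
          have h0 : (((0 : ℕ).choose (A + 1) + (0 : ℕ).choose (B + 1) : ℤ))
              • xw (wwW 0 (N + 1 - 0)) = 0 := by
            have hA0 : Nat.choose 0 (A + 1) = 0 := Nat.choose_eq_zero_of_lt (by omega)
            have hB0 : Nat.choose 0 (B + 1) = 0 := Nat.choose_eq_zero_of_lt (by omega)
            simp [hA0, hB0]
          rw [h0, add_zero]
          apply Finset.sum_congr rfl
          intro p hp
          simp only [Finset.mem_range] at hp
          rw [← add_smul]
          have hword : N - p = N + 1 - (p + 1) := by omega
          rw [hword]
          congr 1
          have hA1 : Nat.choose (p + 1) (A + 1) = Nat.choose p A + Nat.choose p (A + 1) :=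
            Nat.choose_succ_succ p A
          have hB1 : Nat.choose (p + 1) (B + 1) = Nat.choose p B + Nat.choose p (B + 1) :=
            Nat.choose_succ_succ p B
          push_cast [hA1, hB1]; ring

/-- For `n ≥ 2`:
`∑_{r+s=n, r,s ≥ 1} z_r ш z_s = ∑_{t₁+t₂=n, t₁,t₂ ≥ 1} 2^{t₁} z_{t₁,t₂}`,
where `ш` is the shuffle product transported to `z`-words. -/
theorem shuffle_sum_depth_two
    (sh : XWords →ₗ[ℤ] XWords →ₗ[ℤ] XWords)
    (hsunitl : ∀ w : XWords, sh (xw []) w = w)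
    (hsunitr : ∀ w : XWords, sh w (xw []) = w)
    (hsrec : ∀ (a b : Bool) (u v : List Bool),
      sh (xw (a :: u)) (xw (b :: v)) =
        Finsupp.mapDomain (List.cons a) (sh (xw u) (xw (b :: v))) +
          Finsupp.mapDomain (List.cons b) (sh (xw (a :: u)) (xw v)))
    (msh : QWords →ₗ[ℤ] QWords →ₗ[ℤ] QWords)
    (hsupp : ∀ u v : List ℕ, (∀ x ∈ u, 1 ≤ x) → (∀ x ∈ v, 1 ≤ x) →
      ∀ l ∈ (msh (zw u) (zw v)).support, ∀ x ∈ l, 1 ≤ x)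
    (hcompat : ∀ u v : List ℕ, (∀ x ∈ u, 1 ≤ x) → (∀ x ∈ v, 1 ≤ x) →
      Finsupp.mapDomain encodeWord (msh (zw u) (zw v)) =
        sh (xw (encodeWord u)) (xw (encodeWord v)))
    (n : ℕ) (hn : 2 ≤ n) :
    ∑ p ∈ (Finset.HasAntidiagonal.antidiagonal n).filter (fun p => 1 ≤ p.1 ∧ 1 ≤ p.2),
        msh (zw [p.1]) (zw [p.2])
      = ∑ p ∈ (Finset.HasAntidiagonal.antidiagonal n).filter (fun p => 1 ≤ p.1 ∧ 1 ≤ p.2),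
          ((2 : ℤ) ^ p.1) • zw [p.1, p.2] := by
  obtain ⟨m, rfl⟩ : ∃ m, n = m + 2 := ⟨n - 2, by omega⟩
  set S := (Finset.HasAntidiagonal.antidiagonal (m + 2)).filter (fun p => 1 ≤ p.1 ∧ 1 ≤ p.2) with hS
  -- encodings of the basic words
  have e1 : ∀ r : ℕ, encodeWord [r] = wzW (r - 1) := by
    intro r; simp [encodeWord, wzW]
  have e2 : ∀ t1 t2 : ℕ, encodeWord [t1, t2] = wwW (t1 - 1) (t2 - 1) := by
    intro t1 t2; simp [encodeWord, wwW]
  -- both sides have good supports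
  have hgoodL : ∀ l ∈ (∑ p ∈ S, msh (zw [p.1]) (zw [p.2])).support, ∀ x ∈ l, 1 ≤ x := by
    intro l hl
    obtain ⟨p, hp, hlp⟩ := Finsupp.mem_support_finset_sum l hl
    simp only [hS, Finset.mem_filter, Finset.HasAntidiagonal.mem_antidiagonal] at hp
    exact hsupp [p.1] [p.2] (by simpa using hp.2.1) (by simpa using hp.2.2) l hlp
  have hgoodR : ∀ l ∈ (∑ p ∈ S, ((2 : ℤ) ^ p.1) • zw [p.1, p.2]).support,
      ∀ x ∈ l, 1 ≤ x := by
    intro l hl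
    obtain ⟨p, hp, hlp⟩ := Finsupp.mem_support_finset_sum l hl
    simp only [hS, Finset.mem_filter, Finset.HasAntidiagonal.mem_antidiagonal] at hp
    have : l ∈ (zw [p.1, p.2]).support := Finsupp.support_smul hlp
    simp only [zw, Finsupp.support_single_ne_zero _ one_ne_zero, Finset.mem_singleton] at this
    subst this
    intro x hx
    simp only [List.mem_cons, List.not_mem_nil, or_false] at hx
    rcases hx with rfl | rfl
    · exact hp.2.1
    · exact hp.2.2
  -- the encoded equality
  have henc : Finsupp.mapDomain encodeWord (∑ p ∈ S, msh (zw [p.1]) (zw [p.2]))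
      = Finsupp.mapDomain encodeWord (∑ p ∈ S, ((2 : ℤ) ^ p.1) • zw [p.1, p.2]) := by
    rw [Finsupp.mapDomain_finset_sum, Finsupp.mapDomain_finset_sum]
    have hL : ∀ p ∈ S, Finsupp.mapDomain encodeWord (msh (zw [p.1]) (zw [p.2]))
        = sh (xw (wzW (p.1 - 1))) (xw (wzW (p.2 - 1))) := by
      intro p hp
      simp only [hS, Finset.mem_filter, Finset.HasAntidiagonal.mem_antidiagonal] at hp
      rw [hcompat [p.1] [p.2] (by simpa using hp.2.1) (by simpa using hp.2.2), e1, e1]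
    have hR : ∀ p : ℕ × ℕ, Finsupp.mapDomain encodeWord (((2 : ℤ) ^ p.1) • zw [p.1, p.2])
        = ((2 : ℤ) ^ p.1) • xw (wwW (p.1 - 1) (p.2 - 1)) := by
      intro p
      rw [Finsupp.mapDomain_smul]
      simp [zw, xw, Finsupp.mapDomain_single, e2]
    rw [Finset.sum_congr rfl hL, Finset.sum_congr rfl (fun p _ => hR p)]
    rw [hS, sum_filter_antidiag (fun p => sh (xw (wzW (p.1 - 1))) (xw (wzW (p.2 - 1)))) m,
      sum_filter_antidiag (fun p => ((2 : ℤ) ^ p.1) • xw (wwW (p.1 - 1) (p.2 - 1))) m]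
    simp only [Nat.add_sub_cancel]
    -- LHS: apply the key formula and swap sums
    have hkey : ∀ i ∈ Finset.range (m + 1),
        sh (xw (wzW i)) (xw (wzW (m - i)))
          = ∑ p ∈ Finset.range (m + 1),
              ((p.choose i + p.choose (m - i) : ℤ)) • xw (wwW p (m - p)) := by
      intro i hi
      simp only [Finset.mem_range] at hi
      exact key_formula sh hsunitl hsunitr hsrec m i (m - i) (by omega)
    rw [Finset.sum_congr rfl hkey, Finset.sum_comm]
    apply Finset.sum_congr rfl
    intro p hp
    simp only [Finset.mem_range] at hp
    rw [← Finset.sum_smul]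
    congr 1
    have hchoose : ∀ q : ℕ, q ≤ m → ∑ i ∈ Finset.range (m + 1), (q.choose i : ℤ) = 2 ^ q := by
      intro q hq
      have : ∑ i ∈ Finset.range (m + 1), q.choose i = 2 ^ q := by
        rw [← Nat.sum_range_choose q]
        symm
        apply Finset.sum_subset
        · exact Finset.range_subset_range.2 (by omega)
        · intro i _ hi
          simp only [Finset.mem_range, not_lt] at hi
          exact Nat.choose_eq_zero_of_lt (by omega)
      calc ∑ i ∈ Finset.range (m + 1), (q.choose i : ℤ)
          = ((∑ i ∈ Finset.range (m + 1), q.choose i : ℕ) : ℤ) := by push_cast; ring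
        _ = 2 ^ q := by rw [this]; push_cast; ring
    rw [Finset.sum_add_distrib, hchoose p (by omega)]
    have hrefl : ∑ i ∈ Finset.range (m + 1), (p.choose (m - i) : ℤ)
        = ∑ i ∈ Finset.range (m + 1), (p.choose i : ℤ) := by
      have := Finset.sum_range_reflect (fun i => (p.choose i : ℤ)) (m + 1)
      simpa using this
    rw [hrefl, hchoose p (by omega)]
    ring
  -- transfer back
  calc ∑ p ∈ S, msh (zw [p.1]) (zw [p.2])
      = Finsupp.mapDomain decodeWord
          (Finsupp.mapDomain encodeWord (∑ p ∈ S, msh (zw [p.1]) (zw [p.2]))) :=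
        (recover _ hgoodL).symm
    _ = Finsupp.mapDomain decodeWord
          (Finsupp.mapDomain encodeWord (∑ p ∈ S, ((2 : ℤ) ^ p.1) • zw [p.1, p.2])) := by
        rw [henc]
    _ = ∑ p ∈ S, ((2 : ℤ) ^ p.1) • zw [p.1, p.2] := recover _ hgoodR
end

section
/- In the quasi-shuffle algebra, for positive integers k ≥ 3 and n ≥ k, and any fixed s1 ≥ 1: ∑_{r, s2,...,s_{k-1} ≥ 1, r + s2 + ... + s_{k-1} = n − s1} z_{s1}(z_r * z_{s2,...,s_{k-1}}) = (k−1) ∑_{ti ≥ 1, s1 + t1 + ... + t_{k-1} = n fixed s1} z_{s1, t1,...,t_{k-1}} + (n − s1 − k + 2) ∑_{ui ≥ 1, u1 + ... + u_{k-2} = n − s1} z_{s1, u1,...,u_{k-2}}, provided n − s1 ≥ k − 1. -/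
open Finsupp

/-- Prepending the letter `z_r`, as a linear operator. -/
noncomputable def zcons (r : ℕ) : QWords →ₗ[ℤ] QWords :=
  Finsupp.lmapDomain ℤ ℤ (List.cons r)

/-! ### Auxiliary list operations and lemmas -/

lemma zcons_zw (r : ℕ) (l : List ℕ) : zcons r (zw l) = zw (r :: l) := by simp [zcons, zw]

/-- Insert `r` at position `i` of `w`. -/
def insL (r : ℕ) (w : List ℕ) (i : ℕ) : List ℕ := w.take i ++ r :: w.drop i

/-- Merge `r` into the `j`-th entry of `w`. -/
def merL (r : ℕ) (w : List ℕ) (j : ℕ) : List ℕ := w.take j ++ (r + w.getD j 0) :: w.drop (j+1)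

/-- Delete the `i`-th entry of `u`. -/
def delL (u : List ℕ) (i : ℕ) : List ℕ := u.take i ++ u.drop (i+1)

/-- Subtract `r` from the `j`-th entry of `u`. -/
def repL (u : List ℕ) (j r : ℕ) : List ℕ := u.take j ++ (u.getD j 0 - r) :: u.drop (j+1)

lemma insL_zero (r : ℕ) (w : List ℕ) : insL r w 0 = r :: w := by simp [insL]
lemma insL_cons (r s : ℕ) (v : List ℕ) (i : ℕ) : insL r (s :: v) (i+1) = s :: insL r v i := by
  simp [insL]
lemma merL_zero (r s : ℕ) (v : List ℕ) : merL r (s :: v) 0 = (r + s) :: v := by simp [merL]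
lemma merL_cons (r s : ℕ) (v : List ℕ) (j : ℕ) : merL r (s :: v) (j+1) = s :: merL r v j := by
  simp [merL]

lemma insL_length (r : ℕ) (w : List ℕ) (i : ℕ) (h : i ≤ w.length) :
    (insL r w i).length = w.length + 1 := by simp [insL]; omega

lemma insL_sum (r : ℕ) (w : List ℕ) (i : ℕ) : (insL r w i).sum = r + w.sum := by
  have := List.sum_take_add_sum_drop w i
  simp [insL]; omega

lemma insL_pos (r : ℕ) (w : List ℕ) (i : ℕ) (hr : 0 < r) (hw : ∀ x ∈ w, 0 < x) :
    ∀ x ∈ insL r w i, 0 < x := by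
  intro x hx
  simp only [insL, List.mem_append, List.mem_cons] at hx
  rcases hx with h | h | h
  · exact hw x (List.take_subset _ _ h)
  · omega
  · exact hw x (List.drop_subset _ _ h)

lemma getD_append_cons (l₁ l₂ : List ℕ) (a : ℕ) : (l₁ ++ a :: l₂).getD l₁.length 0 = a := by
  induction l₁ with
  | nil => simp
  | cons b t ih => simpa using ih

lemma take_len (w : List ℕ) (i : ℕ) (h : i ≤ w.length) : (w.take i).length = i := by
  simp; omega

lemma insL_getD (r : ℕ) (w : List ℕ) (i : ℕ) (h : i ≤ w.length) :
    (insL r w i).getD i 0 = r := by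
  have := getD_append_cons (w.take i) (w.drop i) r
  rwa [take_len w i h] at this

lemma cons_eq_append (l₁ l₂ : List ℕ) (a : ℕ) : l₁ ++ a :: l₂ = (l₁ ++ [a]) ++ l₂ := by simp

lemma delL_insL (r : ℕ) (w : List ℕ) (i : ℕ) (h : i ≤ w.length) :
    delL (insL r w i) i = w := by
  have h1 : (w.take i).length = i := take_len w i h
  unfold delL insL
  rw [List.take_left' h1, cons_eq_append, List.drop_left' (by simp [h1]),
    List.take_append_drop]

lemma insL_delL (u : List ℕ) (i : ℕ) (h : i < u.length) :
    insL (u.getD i 0) (delL u i) i = u := by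
  have h1 : (u.take i).length = i := take_len u i (le_of_lt h)
  unfold insL delL
  rw [List.take_left' h1, List.drop_left' h1, List.getD_eq_getElem _ _ h,
    ← List.drop_eq_getElem_cons h, List.take_append_drop]

lemma delL_length (u : List ℕ) (i : ℕ) (h : i < u.length) :
    (delL u i).length = u.length - 1 := by simp [delL]; omega

lemma delL_sum (u : List ℕ) (i : ℕ) (h : i < u.length) :
    u.getD i 0 + (delL u i).sum = u.sum := by
  have h1 := List.sum_take_add_sum_drop u i
  have h2 : u.drop i = u[i] :: u.drop (i+1) := List.drop_eq_getElem_cons h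
  rw [h2, List.sum_cons] at h1
  rw [List.getD_eq_getElem _ _ h]
  simp [delL]; omega

lemma delL_pos (u : List ℕ) (i : ℕ) (hw : ∀ x ∈ u, 0 < x) : ∀ x ∈ delL u i, 0 < x := by
  intro x hx
  simp only [delL, List.mem_append] at hx
  rcases hx with h | h
  · exact hw x (List.take_subset _ _ h)
  · exact hw x (List.drop_subset _ _ h)

lemma getD_pos (u : List ℕ) (i : ℕ) (h : i < u.length) (hw : ∀ x ∈ u, 0 < x) :
    0 < u.getD i 0 := by
  rw [List.getD_eq_getElem _ _ h]
  exact hw _ (List.getElem_mem h)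

lemma merL_length (r : ℕ) (w : List ℕ) (j : ℕ) (h : j < w.length) :
    (merL r w j).length = w.length := by simp [merL]; omega

lemma merL_sum (r : ℕ) (w : List ℕ) (j : ℕ) (h : j < w.length) :
    (merL r w j).sum = r + w.sum := by
  have h1 := List.sum_take_add_sum_drop w j
  have h2 : w.drop j = w[j] :: w.drop (j+1) := List.drop_eq_getElem_cons h
  rw [h2, List.sum_cons] at h1
  have h3 : w.getD j 0 = w[j] := List.getD_eq_getElem _ _ h
  unfold merL
  rw [List.sum_append, List.sum_cons, h3]
  omega

lemma merL_pos (r : ℕ) (w : List ℕ) (j : ℕ) (hr : 0 < r) (hw : ∀ x ∈ w, 0 < x) :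
    ∀ x ∈ merL r w j, 0 < x := by
  intro x hx
  simp only [merL, List.mem_append, List.mem_cons] at hx
  rcases hx with h | h | h
  · exact hw x (List.take_subset _ _ h)
  · omega
  · exact hw x (List.drop_subset _ _ h)

lemma merL_getD (r : ℕ) (w : List ℕ) (j : ℕ) (h : j < w.length) :
    (merL r w j).getD j 0 = r + w.getD j 0 := by
  have := getD_append_cons (w.take j) (w.drop (j+1)) (r + w.getD j 0)
  rwa [take_len w j (le_of_lt h)] at this

lemma merL_take (r : ℕ) (w : List ℕ) (j : ℕ) (h : j < w.length) :
    (merL r w j).take j = w.take j := by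
  unfold merL; exact List.take_left' (take_len w j (le_of_lt h))

lemma merL_drop (r : ℕ) (w : List ℕ) (j : ℕ) (h : j < w.length) :
    (merL r w j).drop (j+1) = w.drop (j+1) := by
  unfold merL; rw [cons_eq_append]
  exact List.drop_left' (by rw [List.length_append, take_len w j (le_of_lt h)]; rfl)

lemma repL_take (u : List ℕ) (j r : ℕ) (h : j < u.length) :
    (repL u j r).take j = u.take j := by
  unfold repL; exact List.take_left' (take_len u j (le_of_lt h))

lemma repL_drop (u : List ℕ) (j r : ℕ) (h : j < u.length) :
    (repL u j r).drop (j+1) = u.drop (j+1) := by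
  unfold repL; rw [cons_eq_append]
  exact List.drop_left' (by rw [List.length_append, take_len u j (le_of_lt h)]; rfl)

lemma repL_getD (u : List ℕ) (j r : ℕ) (h : j < u.length) :
    (repL u j r).getD j 0 = u.getD j 0 - r := by
  have := getD_append_cons (u.take j) (u.drop (j+1)) (u.getD j 0 - r)
  rwa [take_len u j (le_of_lt h)] at this

lemma repL_merL (r : ℕ) (w : List ℕ) (j : ℕ) (h : j < w.length) :
    repL (merL r w j) j r = w := by
  unfold repL
  rw [merL_take r w j h, merL_drop r w j h, merL_getD r w j h, Nat.add_sub_cancel_left,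
    List.getD_eq_getElem _ _ h, ← List.drop_eq_getElem_cons h, List.take_append_drop]

lemma merL_repL (u : List ℕ) (j r : ℕ) (h : j < u.length) (hr : r ≤ u.getD j 0) :
    merL r (repL u j r) j = u := by
  unfold merL
  rw [repL_take u j r h, repL_drop u j r h, repL_getD u j r h, Nat.add_sub_cancel' hr,
    List.getD_eq_getElem _ _ h, ← List.drop_eq_getElem_cons h, List.take_append_drop]

lemma repL_length (u : List ℕ) (j r : ℕ) (h : j < u.length) :
    (repL u j r).length = u.length := by simp [repL]; omega

lemma repL_sum (u : List ℕ) (j r : ℕ) (h : j < u.length) (hr : r ≤ u.getD j 0) :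
    r + (repL u j r).sum = u.sum := by
  have h1 := List.sum_take_add_sum_drop u j
  have h2 : u.drop j = u[j] :: u.drop (j+1) := List.drop_eq_getElem_cons h
  rw [h2, List.sum_cons] at h1
  have h3 : u.getD j 0 = u[j] := List.getD_eq_getElem _ _ h
  rw [h3] at hr
  unfold repL
  rw [List.sum_append, List.sum_cons, h3]
  omega

lemma repL_pos (u : List ℕ) (j r : ℕ) (hrj : r < u.getD j 0) (hw : ∀ x ∈ u, 0 < x) :
    ∀ x ∈ repL u j r, 0 < x := by
  intro x hx
  simp only [repL, List.mem_append, List.mem_cons] at hx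
  rcases hx with h | h | h
  · exact hw x (List.take_subset _ _ h)
  · omega
  · exact hw x (List.drop_subset _ _ h)

lemma sum_getD (l : List ℕ) : ∑ j ∈ Finset.range l.length, l.getD j 0 = l.sum := by
  induction l with
  | nil => simp
  | cons a t ih =>
    rw [List.length_cons, Finset.sum_range_succ']
    simp only [List.getD_cons_succ, List.getD_cons_zero, List.sum_cons, ih]
    omega

lemma headI_tail {l : List ℕ} (h : l ≠ []) : l.headI :: l.tail = l := by
  cases l with
  | nil => exact absurd rfl h
  | cons a t => rfl

/-- Build a composition from a list, with a default fallback. -/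
noncomputable def ofList (m : ℕ) (l : List ℕ) (c : Composition m) : Composition m :=
  if h : (∀ x ∈ l, 0 < x) ∧ l.sum = m then ⟨l, fun hx => h.1 _ hx, h.2⟩ else c

lemma ofList_blocks {m : ℕ} {l : List ℕ} (c : Composition m)
    (h1 : ∀ x ∈ l, 0 < x) (h2 : l.sum = m) : (ofList m l c).blocks = l := by
  rw [ofList, dif_pos ⟨h1, h2⟩]

/-- The product of a single letter with a word: insertions plus merges. -/
lemma mul_single_eq (mul : QWords →ₗ[ℤ] QWords →ₗ[ℤ] QWords)
    (hunitl : ∀ w : QWords, mul (zw []) w = w)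
    (hunitr : ∀ w : QWords, mul w (zw []) = w)
    (hrec : ∀ (r s : ℕ) (u v : List ℕ), 1 ≤ r → 1 ≤ s →
      (∀ x ∈ u, 1 ≤ x) → (∀ x ∈ v, 1 ≤ x) →
      mul (zw (r :: u)) (zw (s :: v)) =
        zcons r (mul (zw u) (zw (s :: v))) + zcons s (mul (zw (r :: u)) (zw v)) +
          zcons (r + s) (mul (zw u) (zw v))) :
    ∀ (w : List ℕ) (r : ℕ), 1 ≤ r → (∀ x ∈ w, 1 ≤ x) →
      mul (zw [r]) (zw w) =
        (∑ i ∈ Finset.range (w.length + 1), zw (insL r w i))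
          + ∑ j ∈ Finset.range w.length, zw (merL r w j) := by
  intro w
  induction w with
  | nil =>
    intro r hr _
    simp [hunitr (zw [r]), insL_zero]
  | cons s v ih =>
    intro r hr hw
    have hs : 1 ≤ s := hw s (by simp)
    have hv : ∀ x ∈ v, 1 ≤ x := fun x hx => hw x (by simp [hx])
    have h1 := hrec r s [] v hr hs (by simp) hv
    rw [hunitl, hunitl] at h1
    rw [show ([r] : List ℕ) = r :: [] from rfl, h1, ih r hr hv, map_add, map_sum, map_sum]
    simp only [zcons_zw]
    conv_rhs => rw [List.length_cons]
    rw [Finset.sum_range_succ' (fun i => zw (insL r (s :: v) i)) (v.length + 1),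
      Finset.sum_range_succ' (fun j => zw (merL r (s :: v) j)) v.length]
    simp only [insL_cons, merL_cons, insL_zero, merL_zero]
    abel

/-- Counting the insertion terms. -/
lemma ins_count (m d s₁ : ℕ) (hd : 2 ≤ d) :
    ∑ c ∈ Finset.univ.filter (fun c : Composition m => c.length = d),
      ∑ i ∈ Finset.range d, zw (s₁ :: insL c.blocks.headI c.blocks.tail i)
    = ∑ c ∈ Finset.univ.filter (fun c : Composition m => c.length = d),
      ∑ i ∈ Finset.range d, zw (s₁ :: c.blocks) := by
  classical
  set F := Finset.univ.filter (fun c : Composition m => c.length = d) with hF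
  have hmem : ∀ c : Composition m, c ∈ F ↔ c.blocks.length = d := by
    intro c; simp [hF, Composition.length]
  rw [← Finset.sum_product F (Finset.range d)
      (fun p : Composition m × ℕ => zw (s₁ :: insL p.1.blocks.headI p.1.blocks.tail p.2)),
    ← Finset.sum_product F (Finset.range d)
      (fun p : Composition m × ℕ => zw (s₁ :: p.1.blocks))]
  apply Finset.sum_nbij'
    (i := fun p => (ofList m (insL p.1.blocks.headI p.1.blocks.tail p.2) p.1, p.2))
    (j := fun q => (ofList m (q.1.blocks.getD q.2 0 :: delL q.1.blocks q.2) q.1, q.2))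
  · -- forward map lands in target
    rintro ⟨c, i⟩ hp
    rw [Finset.mem_product] at hp ⊢
    obtain ⟨hc, hi⟩ := hp
    rw [hmem] at hc
    replace hc : c.blocks.length = d := hc
    rw [Finset.mem_range] at hi
    have hne : c.blocks ≠ [] := by intro h; rw [h] at hc; simp at hc; omega
    have hht := headI_tail hne
    have htl : c.blocks.tail.length = d - 1 := by rw [List.length_tail, hc]
    have hpos : ∀ x ∈ insL c.blocks.headI c.blocks.tail i, 0 < x := by
      apply insL_pos
      · exact c.blocks_pos (by rw [← hht]; exact List.mem_cons_self)
      · intro x hx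
        exact c.blocks_pos (by rw [← hht]; exact List.mem_cons_of_mem _ hx)
    have hsum : (insL c.blocks.headI c.blocks.tail i).sum = m := by
      rw [insL_sum, ← List.sum_cons, hht, c.blocks_sum]
    refine ⟨?_, by exact Finset.mem_range.2 hi⟩
    rw [hmem, ofList_blocks _ hpos hsum, insL_length _ _ _ (by omega), htl]
    omega
  · -- backward map lands in source
    rintro ⟨u, i⟩ hq
    rw [Finset.mem_product] at hq ⊢
    obtain ⟨hu, hi⟩ := hq
    rw [hmem] at hu
    replace hu : u.blocks.length = d := hu
    rw [Finset.mem_range] at hi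
    have hiu : i < u.blocks.length := by omega
    have hpos : ∀ x ∈ u.blocks.getD i 0 :: delL u.blocks i, 0 < x := by
      intro x hx
      rcases List.mem_cons.1 hx with h | h
      · rw [h]; exact getD_pos _ _ hiu (fun y hy => u.blocks_pos hy)
      · exact delL_pos _ _ (fun y hy => u.blocks_pos hy) x h
    have hsum : (u.blocks.getD i 0 :: delL u.blocks i).sum = m := by
      rw [List.sum_cons, delL_sum _ _ hiu, u.blocks_sum]
    refine ⟨?_, by exact Finset.mem_range.2 hi⟩
    rw [hmem, ofList_blocks _ hpos hsum, List.length_cons, delL_length _ _ hiu]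
    omega
  · -- left inverse
    rintro ⟨c, i⟩ hp
    rw [Finset.mem_product] at hp
    obtain ⟨hc, hi⟩ := hp
    rw [hmem] at hc
    replace hc : c.blocks.length = d := hc
    rw [Finset.mem_range] at hi
    have hne : c.blocks ≠ [] := by intro h; rw [h] at hc; simp at hc; omega
    have hht := headI_tail hne
    have htl : c.blocks.tail.length = d - 1 := by rw [List.length_tail, hc]
    have hil : i ≤ c.blocks.tail.length := by omega
    have hpos : ∀ x ∈ insL c.blocks.headI c.blocks.tail i, 0 < x := by
      apply insL_pos
      · exact c.blocks_pos (by rw [← hht]; exact List.mem_cons_self)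
      · intro x hx
        exact c.blocks_pos (by rw [← hht]; exact List.mem_cons_of_mem _ hx)
    have hsum : (insL c.blocks.headI c.blocks.tail i).sum = m := by
      rw [insL_sum, ← List.sum_cons, hht, c.blocks_sum]
    have hb := ofList_blocks c hpos hsum
    ext1
    · apply Composition.ext
      dsimp only
      rw [hb, insL_getD _ _ _ hil, delL_insL _ _ _ hil, hht]
      apply ofList_blocks
      · intro x hx; exact c.blocks_pos hx
      · exact c.blocks_sum
    · rfl
  · -- right inverse
    rintro ⟨u, i⟩ hq
    rw [Finset.mem_product] at hq
    obtain ⟨hu, hi⟩ := hq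
    rw [hmem] at hu
    replace hu : u.blocks.length = d := hu
    rw [Finset.mem_range] at hi
    have hiu : i < u.blocks.length := by omega
    have hpos : ∀ x ∈ u.blocks.getD i 0 :: delL u.blocks i, 0 < x := by
      intro x hx
      rcases List.mem_cons.1 hx with h | h
      · rw [h]; exact getD_pos _ _ hiu (fun y hy => u.blocks_pos hy)
      · exact delL_pos _ _ (fun y hy => u.blocks_pos hy) x h
    have hsum : (u.blocks.getD i 0 :: delL u.blocks i).sum = m := by
      rw [List.sum_cons, delL_sum _ _ hiu, u.blocks_sum]
    have hb := ofList_blocks u hpos hsum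
    ext1
    · apply Composition.ext
      dsimp only
      rw [hb, List.headI_cons, List.tail_cons, insL_delL _ _ hiu]
      apply ofList_blocks
      · intro x hx; exact u.blocks_pos hx
      · exact u.blocks_sum
    · rfl
  · -- functions agree
    rintro ⟨c, i⟩ hp
    rw [Finset.mem_product] at hp
    obtain ⟨hc, hi⟩ := hp
    rw [hmem] at hc
    replace hc : c.blocks.length = d := hc
    rw [Finset.mem_range] at hi
    have hne : c.blocks ≠ [] := by intro h; rw [h] at hc; simp at hc; omega
    have hht := headI_tail hne
    have hpos : ∀ x ∈ insL c.blocks.headI c.blocks.tail i, 0 < x := by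
      apply insL_pos
      · exact c.blocks_pos (by rw [← hht]; exact List.mem_cons_self)
      · intro x hx
        exact c.blocks_pos (by rw [← hht]; exact List.mem_cons_of_mem _ hx)
    have hsum : (insL c.blocks.headI c.blocks.tail i).sum = m := by
      rw [insL_sum, ← List.sum_cons, hht, c.blocks_sum]
    dsimp only
    rw [ofList_blocks c hpos hsum]

/-- Counting the merge terms. -/
lemma mer_count (m d s₁ : ℕ) (hd : 2 ≤ d) :
    ∑ c ∈ Finset.univ.filter (fun c : Composition m => c.length = d),
      ∑ j ∈ Finset.range (d - 1), zw (s₁ :: merL c.blocks.headI c.blocks.tail j)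
    = ∑ u ∈ Finset.univ.filter (fun c : Composition m => c.length = d - 1),
      ∑ j ∈ Finset.range (d - 1), ∑ r ∈ Finset.Ico 1 (u.blocks.getD j 0),
        zw (s₁ :: u.blocks) := by
  classical
  set F := Finset.univ.filter (fun c : Composition m => c.length = d) with hF
  set G := Finset.univ.filter (fun c : Composition m => c.length = d - 1) with hG
  have hmemF : ∀ c : Composition m, c ∈ F ↔ c.blocks.length = d := by
    intro c; simp [hF, Composition.length]
  have hmemG : ∀ c : Composition m, c ∈ G ↔ c.blocks.length = d - 1 := by
    intro c; simp [hG, Composition.length]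
  calc
    ∑ c ∈ F, ∑ j ∈ Finset.range (d - 1), zw (s₁ :: merL c.blocks.headI c.blocks.tail j)
      = ∑ p ∈ F ×ˢ Finset.range (d - 1),
          zw (s₁ :: merL p.1.blocks.headI p.1.blocks.tail p.2) :=
        (Finset.sum_product F (Finset.range (d - 1))
          (fun p : Composition m × ℕ =>
            zw (s₁ :: merL p.1.blocks.headI p.1.blocks.tail p.2))).symm
    _ = ∑ x ∈ (G ×ˢ Finset.range (d - 1)).sigma
          (fun q => Finset.Ico 1 (q.1.blocks.getD q.2 0)),
          zw (s₁ :: x.1.1.blocks) := by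
        apply Finset.sum_nbij'
          (i := fun p => ⟨(ofList m (merL p.1.blocks.headI p.1.blocks.tail p.2) p.1, p.2),
            p.1.blocks.headI⟩)
          (j := fun x => (ofList m (x.2 :: repL x.1.1.blocks x.1.2 x.2) x.1.1, x.1.2))
        · -- forward membership
          rintro ⟨c, j⟩ hp
          rw [Finset.mem_product] at hp
          obtain ⟨hc, hj⟩ := hp
          rw [hmemF] at hc
          replace hc : c.blocks.length = d := hc
          rw [Finset.mem_range] at hj
          have hne : c.blocks ≠ [] := by intro h; rw [h] at hc; simp at hc; omega
          have hht := headI_tail hne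
          have htl : c.blocks.tail.length = d - 1 := by rw [List.length_tail, hc]
          have hjt : j < c.blocks.tail.length := by omega
          have hbpos : 0 < c.blocks.headI :=
            c.blocks_pos (by rw [← hht]; exact List.mem_cons_self)
          have htpos : ∀ x ∈ c.blocks.tail, 0 < x := fun x hx =>
            c.blocks_pos (by rw [← hht]; exact List.mem_cons_of_mem _ hx)
          have hpos := merL_pos c.blocks.headI c.blocks.tail j hbpos htpos
          have hsum : (merL c.blocks.headI c.blocks.tail j).sum = m := by
            rw [merL_sum _ _ _ hjt, ← List.sum_cons, hht, c.blocks_sum]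
          have hb := ofList_blocks c hpos hsum
          rw [Finset.mem_sigma, Finset.mem_product]
          refine ⟨⟨?_, Finset.mem_range.2 hj⟩, ?_⟩
          · rw [hmemG]
            show (ofList m (merL c.blocks.headI c.blocks.tail j) c).blocks.length = d - 1
            rw [hb, merL_length _ _ _ hjt, htl]
          · show c.blocks.headI ∈ Finset.Ico 1 _
            have : (ofList m (merL c.blocks.headI c.blocks.tail j) c).blocks.getD j 0
                = c.blocks.headI + c.blocks.tail.getD j 0 := by
              rw [hb, merL_getD _ _ _ hjt]
            rw [Finset.mem_Ico, this]
            have := getD_pos c.blocks.tail j hjt htpos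
            omega
        · -- backward membership
          rintro ⟨⟨u, j⟩, r⟩ hx
          rw [Finset.mem_sigma, Finset.mem_product] at hx
          obtain ⟨⟨hu, hj⟩, hr⟩ := hx
          rw [hmemG] at hu
          replace hu : u.blocks.length = d - 1 := hu
          rw [Finset.mem_range] at hj
          replace hj : j < d - 1 := hj
          rw [Finset.mem_Ico] at hr
          replace hr : 1 ≤ r ∧ r < u.blocks.getD j 0 := hr
          have hju : j < u.blocks.length := by omega
          have hupos : ∀ x ∈ u.blocks, 0 < x := fun x hx => u.blocks_pos hx
          have hpos : ∀ x ∈ r :: repL u.blocks j r, 0 < x := by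
            intro x hx
            rcases List.mem_cons.1 hx with h | h
            · omega
            · exact repL_pos _ _ _ hr.2 hupos x h
          have hsum : (r :: repL u.blocks j r).sum = m := by
            rw [List.sum_cons, repL_sum _ _ _ hju (le_of_lt hr.2), u.blocks_sum]
          rw [Finset.mem_product]
          constructor
          · rw [hmemF]
            show (ofList m (r :: repL u.blocks j r) u).blocks.length = d
            rw [ofList_blocks u hpos hsum, List.length_cons, repL_length _ _ _ hju]
            omega
          · exact Finset.mem_range.2 hj
        · -- left inverse
          rintro ⟨c, j⟩ hp
          rw [Finset.mem_product] at hp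
          obtain ⟨hc, hj⟩ := hp
          rw [hmemF] at hc
          replace hc : c.blocks.length = d := hc
          rw [Finset.mem_range] at hj
          have hne : c.blocks ≠ [] := by intro h; rw [h] at hc; simp at hc; omega
          have hht := headI_tail hne
          have htl : c.blocks.tail.length = d - 1 := by rw [List.length_tail, hc]
          have hjt : j < c.blocks.tail.length := by omega
          have hbpos : 0 < c.blocks.headI :=
            c.blocks_pos (by rw [← hht]; exact List.mem_cons_self)
          have htpos : ∀ x ∈ c.blocks.tail, 0 < x := fun x hx =>
            c.blocks_pos (by rw [← hht]; exact List.mem_cons_of_mem _ hx)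
          have hpos := merL_pos c.blocks.headI c.blocks.tail j hbpos htpos
          have hsum : (merL c.blocks.headI c.blocks.tail j).sum = m := by
            rw [merL_sum _ _ _ hjt, ← List.sum_cons, hht, c.blocks_sum]
          have hb := ofList_blocks c hpos hsum
          dsimp only
          ext1
          · apply Composition.ext
            dsimp only
            rw [hb, repL_merL _ _ _ hjt, hht]
            apply ofList_blocks
            · intro x hx; exact c.blocks_pos hx
            · exact c.blocks_sum
          · rfl
        · -- right inverse
          rintro ⟨⟨u, j⟩, r⟩ hx
          rw [Finset.mem_sigma, Finset.mem_product] at hx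
          obtain ⟨⟨hu, hj⟩, hr⟩ := hx
          rw [hmemG] at hu
          replace hu : u.blocks.length = d - 1 := hu
          rw [Finset.mem_range] at hj
          replace hj : j < d - 1 := hj
          rw [Finset.mem_Ico] at hr
          replace hr : 1 ≤ r ∧ r < u.blocks.getD j 0 := hr
          have hju : j < u.blocks.length := by omega
          have hupos : ∀ x ∈ u.blocks, 0 < x := fun x hx => u.blocks_pos hx
          have hpos : ∀ x ∈ r :: repL u.blocks j r, 0 < x := by
            intro x hx
            rcases List.mem_cons.1 hx with h | h
            · omega
            · exact repL_pos _ _ _ hr.2 hupos x h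
          have hsum : (r :: repL u.blocks j r).sum = m := by
            rw [List.sum_cons, repL_sum _ _ _ hju (le_of_lt hr.2), u.blocks_sum]
          have hb := ofList_blocks u hpos hsum
          dsimp only
          have e1 : (ofList m (r :: repL u.blocks j r) u).blocks.headI = r := by
            rw [hb, List.headI_cons]
          have e2 : (ofList m (r :: repL u.blocks j r) u).blocks.tail = repL u.blocks j r := by
            rw [hb, List.tail_cons]
          rw [e1, e2, merL_repL _ _ _ hju (le_of_lt hr.2)]
          have e4 : ofList m u.blocks (ofList m (r :: repL u.blocks j r) u) = u := by
            apply Composition.ext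
            apply ofList_blocks
            · intro x hx; exact u.blocks_pos hx
            · exact u.blocks_sum
          rw [e4]
        · -- functions agree
          rintro ⟨c, j⟩ hp
          rw [Finset.mem_product] at hp
          obtain ⟨hc, hj⟩ := hp
          rw [hmemF] at hc
          replace hc : c.blocks.length = d := hc
          rw [Finset.mem_range] at hj
          have hne : c.blocks ≠ [] := by intro h; rw [h] at hc; simp at hc; omega
          have hht := headI_tail hne
          have htl : c.blocks.tail.length = d - 1 := by rw [List.length_tail, hc]
          have hjt : j < c.blocks.tail.length := by omega
          have hbpos : 0 < c.blocks.headI :=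
            c.blocks_pos (by rw [← hht]; exact List.mem_cons_self)
          have htpos : ∀ x ∈ c.blocks.tail, 0 < x := fun x hx =>
            c.blocks_pos (by rw [← hht]; exact List.mem_cons_of_mem _ hx)
          have hpos := merL_pos c.blocks.headI c.blocks.tail j hbpos htpos
          have hsum : (merL c.blocks.headI c.blocks.tail j).sum = m := by
            rw [merL_sum _ _ _ hjt, ← List.sum_cons, hht, c.blocks_sum]
          dsimp only
          rw [ofList_blocks c hpos hsum]
    _ = ∑ q ∈ G ×ˢ Finset.range (d - 1), ∑ r ∈ Finset.Ico 1 (q.1.blocks.getD q.2 0),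
          zw (s₁ :: q.1.blocks) :=
        Finset.sum_sigma _ _ _
    _ = ∑ u ∈ G, ∑ j ∈ Finset.range (d - 1), ∑ r ∈ Finset.Ico 1 (u.blocks.getD j 0),
          zw (s₁ :: u.blocks) :=
        Finset.sum_product G (Finset.range (d - 1)) _

/-- The lower-depth quasi-shuffle sum formula with left concatenation
by `z_{s₁}`: for `k ≥ 3`, `n ≥ k`, `s₁ ≥ 1` with `n - s₁ ≥ k - 1`. -/
theorem quasi_shuffle_sum_formula_concat
    (mul : QWords →ₗ[ℤ] QWords →ₗ[ℤ] QWords)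
    (hunitl : ∀ w : QWords, mul (zw []) w = w)
    (hunitr : ∀ w : QWords, mul w (zw []) = w)
    (hrec : ∀ (r s : ℕ) (u v : List ℕ), 1 ≤ r → 1 ≤ s →
      (∀ x ∈ u, 1 ≤ x) → (∀ x ∈ v, 1 ≤ x) →
      mul (zw (r :: u)) (zw (s :: v)) =
        zcons r (mul (zw u) (zw (s :: v))) + zcons s (mul (zw (r :: u)) (zw v)) +
          zcons (r + s) (mul (zw u) (zw v)))
    (k n s₁ : ℕ) (hk : 3 ≤ k) (hn : k ≤ n) (hs₁ : 1 ≤ s₁)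
    (hns : s₁ + (k - 1) ≤ n) :
    ∑ c ∈ Finset.univ.filter (fun c : Composition (n - s₁) => c.length = k - 1),
        zcons s₁ (mul (zw [c.blocks.headI]) (zw c.blocks.tail))
      = ((k : ℤ) - 1) •
          (∑ c ∈ Finset.univ.filter (fun c : Composition (n - s₁) => c.length = k - 1),
            zw (s₁ :: c.blocks))
        + ((n : ℤ) - s₁ - k + 2) •
          (∑ c ∈ Finset.univ.filter (fun c : Composition (n - s₁) => c.length = k - 2),
            zw (s₁ :: c.blocks)) := by
  classical
  set m := n - s₁ with hm
  set d := k - 1 with hd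
  have hd2 : 2 ≤ d := by omega
  have hmd : d ≤ m := by omega
  have hkd : k - 2 = d - 1 := by omega
  rw [hkd]
  -- Step 1: rewrite each summand using the product formula.
  have step1 : ∀ c ∈ Finset.univ.filter (fun c : Composition m => c.length = d),
      zcons s₁ (mul (zw [c.blocks.headI]) (zw c.blocks.tail))
        = (∑ i ∈ Finset.range d, zw (s₁ :: insL c.blocks.headI c.blocks.tail i))
          + ∑ j ∈ Finset.range (d - 1), zw (s₁ :: merL c.blocks.headI c.blocks.tail j) := by
    intro c hc
    rw [Finset.mem_filter] at hc
    have hc' : c.blocks.length = d := hc.2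
    have hne : c.blocks ≠ [] := by intro h; rw [h] at hc'; simp at hc'; omega
    have hht := headI_tail hne
    have hbpos : 1 ≤ c.blocks.headI :=
      c.blocks_pos (by rw [← hht]; exact List.mem_cons_self)
    have htpos : ∀ x ∈ c.blocks.tail, 1 ≤ x := fun x hx =>
      c.blocks_pos (by rw [← hht]; exact List.mem_cons_of_mem _ hx)
    have htl : c.blocks.tail.length = d - 1 := by rw [List.length_tail, hc']
    rw [mul_single_eq mul hunitl hunitr hrec c.blocks.tail c.blocks.headI hbpos htpos,
      map_add, map_sum, map_sum]
    simp only [zcons_zw]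
    rw [htl, show d - 1 + 1 = d from by omega]
  rw [Finset.sum_congr rfl step1, Finset.sum_add_distrib, ins_count m d s₁ hd2,
    mer_count m d s₁ hd2]
  -- Now handle the two counts.
  have e1 : ∑ c ∈ Finset.univ.filter (fun c : Composition m => c.length = d),
        ∑ _i ∈ Finset.range d, zw (s₁ :: c.blocks)
      = ((k : ℤ) - 1) • ∑ c ∈ Finset.univ.filter (fun c : Composition m => c.length = d),
          zw (s₁ :: c.blocks) := by
    rw [Finset.smul_sum]
    apply Finset.sum_congr rfl
    intro c _
    rw [Finset.sum_const, Finset.card_range,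
      show ((k : ℤ) - 1) = ((d : ℕ) : ℤ) from by omega, natCast_zsmul]
  have e2 : ∑ u ∈ Finset.univ.filter (fun c : Composition m => c.length = d - 1),
        ∑ j ∈ Finset.range (d - 1), ∑ _r ∈ Finset.Ico 1 (u.blocks.getD j 0),
          zw (s₁ :: u.blocks)
      = ((n : ℤ) - s₁ - k + 2) •
          ∑ u ∈ Finset.univ.filter (fun c : Composition m => c.length = d - 1),
            zw (s₁ :: u.blocks) := by
    rw [Finset.smul_sum]
    apply Finset.sum_congr rfl
    intro u hu
    rw [Finset.mem_filter] at hu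
    have hu' : u.blocks.length = d - 1 := hu.2
    have hpos : ∀ j ∈ Finset.range (d - 1), 1 ≤ u.blocks.getD j 0 := by
      intro j hj
      rw [Finset.mem_range] at hj
      exact getD_pos _ _ (by omega) (fun y hy => u.blocks_pos hy)
    have hsum : ∑ j ∈ Finset.range (d - 1), u.blocks.getD j 0 = m := by
      rw [← hu', sum_getD, u.blocks_sum]
    calc
      ∑ j ∈ Finset.range (d - 1), ∑ _r ∈ Finset.Ico 1 (u.blocks.getD j 0),
          zw (s₁ :: u.blocks)
        = ∑ j ∈ Finset.range (d - 1), (u.blocks.getD j 0 - 1) • zw (s₁ :: u.blocks) := by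
          apply Finset.sum_congr rfl
          intro j _
          rw [Finset.sum_const, Nat.card_Ico]
      _ = (∑ j ∈ Finset.range (d - 1), (u.blocks.getD j 0 - 1)) • zw (s₁ :: u.blocks) :=
          (Finset.sum_smul).symm
      _ = ((n : ℤ) - s₁ - k + 2) • zw (s₁ :: u.blocks) := by
          have h2 : ∑ j ∈ Finset.range (d - 1), (u.blocks.getD j 0 - 1 + 1) = m := by
            rw [Finset.sum_congr rfl (fun j hj => by rw [Nat.sub_add_cancel (hpos j hj)])]
            exact hsum
          rw [Finset.sum_add_distrib, Finset.sum_const, Finset.card_range, smul_eq_mul,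
            mul_one] at h2
          rw [show ∑ j ∈ Finset.range (d - 1), (u.blocks.getD j 0 - 1) = m - (d - 1)
              from by omega,
            show ((n : ℤ) - s₁ - k + 2) = ((m - (d - 1) : ℕ) : ℤ) from by omega,
            natCast_zsmul]
  rw [e1, e2]
end
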